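/- Let u be a quasi-definite moment functional on Π^d with OPS {ℙ_n} and let v be its Uvarov modification at N distinct points ξ_1,…,ξ_N with nonzero masses λ_1,…,λ_N. Suppose that for every n ≥ 1 the matrix I_N + Λ𝒦_{n−1} is invertible and that for every n ≥ 0 the matrix Ĥ_n = H_n + 𝖯_n(ξ)(I_N + Λ𝒦_{n−1})^{−1} Λ 𝖯_n(ξ)^t is invertible (for n = 0 read 𝒦_{−1} = 0). Then the polynomial vectors defined by ℚ_0 = ℙ_0 and ℚ_n(x) = ℙ_n(x) − 𝖯_n(ξ)(I_N + Λ𝒦_{n−1})^{−1} Λ 𝖪_{n−1}(ξ,x) for n ≥ 1 form an OPS with respect to v; in particular v is quasi-definite. -/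

import Mathlib

open MvPolynomial Matrix

/-- The index set for monomials of total degree `n` in `d` variables:
multi-indices (exponent tuples) summing to `n`. Its cardinality is `r_n^d = C(n+d-1,n)`. -/
abbrev Idx (d n : ℕ) : Type := {ν : Fin d → ℕ // ν ∈ Finset.Nat.antidiagonalTuple d n}

/-- The monomial `x^ν` associated with a multi-index `ν` of total degree `n`;
the family `fun α : Idx d n => monIdx α` is the canonical vector `𝕏_n`. -/
noncomputable def monIdx {d n : ℕ} (α : Idx d n) : MvPolynomial (Fin d) ℝ :=
  MvPolynomial.monomial (Finsupp.equivFunOnFinite.symm α.1) 1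

/-- A polynomial system (PS): a sequence of vectors `ℙ_n` of size `r_n^d` whose
entries are polynomials of total degree `n`, the entries of `ℙ_0,…,ℙ_n` forming a
basis of the polynomials of total degree at most `n`. -/
structure PolySystem (d : ℕ) where
  vec : (n : ℕ) → Idx d n → MvPolynomial (Fin d) ℝ
  degree_eq : ∀ n α, (vec n α).totalDegree = n
  indep : LinearIndependent ℝ (fun p : (Σ n : ℕ, Idx d n) => vec p.1 p.2)
  spans : ∀ (n : ℕ) (p : MvPolynomial (Fin d) ℝ), p.totalDegree ≤ n →
    p ∈ Submodule.span ℝ {q | ∃ m ≤ n, ∃ α : Idx d m, q = vec m α}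

/-- `{ℙ_n}` is an orthogonal polynomial system (OPS) with respect to the moment
functional `u` : `⟨u, 𝕏_m ℙ_n^t⟩ = 0` for `m < n` and `⟨u, 𝕏_n ℙ_n^t⟩` nonsingular. -/
def IsOPS {d : ℕ} (u : MvPolynomial (Fin d) ℝ →ₗ[ℝ] ℝ) (P : PolySystem d) : Prop :=
  (∀ m n : ℕ, m < n → ∀ (α : Idx d m) (β : Idx d n), u (monIdx α * P.vec n β) = 0) ∧
  (∀ n : ℕ, IsUnit (Matrix.of fun α β : Idx d n => u (monIdx α * P.vec n β)).det)

/-- `u` is quasi-definite iff it admits an OPS. -/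
def QuasiDefinite {d : ℕ} (u : MvPolynomial (Fin d) ℝ →ₗ[ℝ] ℝ) : Prop :=
  ∃ P : PolySystem d, IsOPS u P

/-- `H_n = ⟨u, ℙ_n ℙ_n^t⟩`. -/
noncomputable def Hmat {d : ℕ} (u : MvPolynomial (Fin d) ℝ →ₗ[ℝ] ℝ) (P : PolySystem d)
    (n : ℕ) : Matrix (Idx d n) (Idx d n) ℝ :=
  Matrix.of fun α β => u (P.vec n α * P.vec n β)

/-- `P_m(u;x,y) = ℙ_m(x)^t H_m⁻¹ ℙ_m(y)`. -/
noncomputable def kerP {d : ℕ} (u : MvPolynomial (Fin d) ℝ →ₗ[ℝ] ℝ) (P : PolySystem d)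
    (m : ℕ) (x y : Fin d → ℝ) : ℝ :=
  ∑ α, ∑ β, eval x (P.vec m α) * (Hmat u P m)⁻¹ α β * eval y (P.vec m β)

/-- `kerLT u P n = K_{n-1}(u;·,·) = Σ_{m<n} P_m(u;·,·)`, so that `kerLT u P 0 = K_{-1} = 0`. -/
noncomputable def kerLT {d : ℕ} (u : MvPolynomial (Fin d) ℝ →ₗ[ℝ] ℝ) (P : PolySystem d)
    (n : ℕ) (x y : Fin d → ℝ) : ℝ :=
  ∑ m ∈ Finset.range n, kerP u P m x y

/-- `𝖯_n(ξ) = (ℙ_n(ξ_1)|⋯|ℙ_n(ξ_N))`. -/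
noncomputable def Pmat {d N : ℕ} (P : PolySystem d) (ξ : Fin N → (Fin d → ℝ)) (n : ℕ) :
    Matrix (Idx d n) (Fin N) ℝ :=
  Matrix.of fun α i => eval (ξ i) (P.vec n α)

/-- `Kmat u P ξ n = 𝒦_{n-1} = (K_{n-1}(u;ξ_i,ξ_j))_{i,j}`, with `𝒦_{-1} = 0`. -/
noncomputable def Kmat {d N : ℕ} (u : MvPolynomial (Fin d) ℝ →ₗ[ℝ] ℝ) (P : PolySystem d)
    (ξ : Fin N → (Fin d → ℝ)) (n : ℕ) : Matrix (Fin N) (Fin N) ℝ :=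
  Matrix.of fun i j => kerLT u P n (ξ i) (ξ j)

/-- `Kvec u P ξ n x = 𝖪_{n-1}(ξ,x) = (K_{n-1}(u;ξ_1,x),…,K_{n-1}(u;ξ_N,x))^t`, with `𝖪_{-1}=0`. -/
noncomputable def Kvec {d N : ℕ} (u : MvPolynomial (Fin d) ℝ →ₗ[ℝ] ℝ) (P : PolySystem d)
    (ξ : Fin N → (Fin d → ℝ)) (n : ℕ) (x : Fin d → ℝ) : Fin N → ℝ :=
  fun i => kerLT u P n (ξ i) x

/-- A PS is monic if the degree-`n` homogeneous part of the entry of `ℙ_n` indexed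
by `α` is exactly the monomial `x^α`. -/
def PolySystem.IsMonic {d : ℕ} (P : PolySystem d) : Prop :=
  ∀ (n : ℕ) (α : Idx d n) (ν : Fin d →₀ ℕ), (ν.sum fun _ e => e) = n →
    MvPolynomial.coeff ν (P.vec n α) = if ν = Finsupp.equivFunOnFinite.symm α.1 then 1 else 0

/-- Multiplication of a real matrix times a vector of polynomials. -/
noncomputable def matVec {d : ℕ} {a b : Type} [Fintype b] (M : Matrix a b ℝ)
    (w : b → MvPolynomial (Fin d) ℝ) (i : a) : MvPolynomial (Fin d) ℝ :=
  ∑ j, M i j • w j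

/-- The matrix `L_{n,i}` determined by `x_i 𝕏_n = L_{n,i} 𝕏_{n+1}`. -/
noncomputable def Lmat (d n : ℕ) (i : Fin d) : Matrix (Idx d n) (Idx d (n + 1)) ℝ :=
  Matrix.of fun α β => if β.1 = (fun j => α.1 j + if j = i then 1 else 0) then 1 else 0

/-- The unique multi-index of degree 0. -/
def zeroIdx {d : ℕ} : Idx d 0 :=
  ⟨fun _ => 0, by simp [Finset.Nat.mem_antidiagonalTuple]⟩

/-- The degree-2 multi-index `e_i + e_j`. -/
def e2 {d : ℕ} (i j : Fin d) : Idx d 2 :=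
  ⟨fun k => (if k = i then 1 else 0) + (if k = j then 1 else 0), by
    simp [Finset.Nat.mem_antidiagonalTuple, Finset.sum_add_distrib]⟩

/-- `A_{h,2} = Σ_{1≤i≤j≤d} a^{(2)}_{ij} L_{h,j} L_{h+1,i}`. -/
noncomputable def Amat2 {d : ℕ} (a2 : Idx d 2 → ℝ) (h : ℕ) :
    Matrix (Idx d h) (Idx d (h + 2)) ℝ :=
  ∑ i : Fin d, ∑ j : Fin d,
    if i ≤ j then a2 (e2 i j) • (Lmat d h j * Lmat d (h + 1) i) else 0

/-- The polynomial `λ(x) = a_2·𝕏_2 + a_1·𝕏_1 + a_0`. -/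
noncomputable def lamPoly {d : ℕ} (a2 : Idx d 2 → ℝ) (a1 : Idx d 1 → ℝ) (a0 : ℝ) :
    MvPolynomial (Fin d) ℝ :=
  (∑ α : Idx d 2, a2 α • monIdx α) + (∑ α : Idx d 1, a1 α • monIdx α) + MvPolynomial.C a0

namespace UvarovProof
open MvPolynomial Matrix Finset

variable {d N : ℕ}

noncomputable def fam (P : PolySystem d) : (Σ n : ℕ, Idx d n) → MvPolynomial (Fin d) ℝ :=
  fun σ => P.vec σ.1 σ.2

lemma degsum (ν : Fin d →₀ ℕ) : (ν.sum fun _ e => e) = ∑ i, ν i :=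
  Finsupp.sum_fintype _ _ (fun _ => rfl)

def mkIdx {m : ℕ} (ν : Fin d →₀ ℕ) (h : (ν.sum fun _ e => e) = m) : Idx d m :=
  ⟨⇑ν, by rw [Finset.Nat.mem_antidiagonalTuple, ← degsum]; exact h⟩

lemma monIdx_mkIdx {m : ℕ} (ν : Fin d →₀ ℕ) (h : (ν.sum fun _ e => e) = m) :
    monIdx (mkIdx ν h) = monomial ν 1 := by
  simp only [monIdx, mkIdx, Finsupp.equivFunOnFinite_symm_coe]

lemma deg_monIdx {m : ℕ} (α : Idx d m) : (monIdx α).totalDegree = m := by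
  rw [monIdx, totalDegree_monomial _ one_ne_zero, degsum]
  simpa using Finset.Nat.mem_antidiagonalTuple.mp α.2

lemma orth_poly (w : MvPolynomial (Fin d) ℝ →ₗ[ℝ] ℝ) {n : ℕ} (r p : MvPolynomial (Fin d) ℝ)
    (h : ∀ m, m < n → ∀ α : Idx d m, w (monIdx α * r) = 0)
    (hp : p.totalDegree < n) : w (p * r) = 0 := by
  conv_lhs => rw [p.as_sum]
  rw [Finset.sum_mul, map_sum]
  refine Finset.sum_eq_zero fun ν hν => ?_
  have hd : (ν.sum fun _ e => e) < n := lt_of_le_of_lt (le_totalDegree hν) hp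
  have h1 : (monomial ν) (coeff ν p) * r = coeff ν p • (monIdx (mkIdx ν rfl) * r) := by
    rw [monIdx_mkIdx, ← smul_mul_assoc, smul_monomial, smul_eq_mul, mul_one]
  rw [h1, LinearMap.map_smul, h _ hd _, smul_zero]

end UvarovProof
namespace UvarovProof
open MvPolynomial Matrix Finset

variable {d N : ℕ}

/-- Finset of finsupp multi-indices of total degree `n`. -/
noncomputable def degSet (d n : ℕ) : Finset (Fin d →₀ ℕ) :=
  (Finset.Nat.antidiagonalTuple d n).map
    ⟨⇑(Finsupp.equivFunOnFinite (α := Fin d) (M := ℕ)).symm, Equiv.injective _⟩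

lemma mem_degSet {n : ℕ} (ν : Fin d →₀ ℕ) :
    ν ∈ degSet d n ↔ (ν.sum fun _ e => e) = n := by
  rw [degSet, Finset.mem_map]
  constructor
  · rintro ⟨x, hx, rfl⟩
    rw [Finset.Nat.mem_antidiagonalTuple] at hx
    rw [degsum]
    simpa using hx
  · intro h
    refine ⟨⇑ν, ?_, by simp⟩
    rw [Finset.Nat.mem_antidiagonalTuple, ← degsum]
    exact h

lemma sum_idx {n : ℕ} (F : (Fin d →₀ ℕ) → ℝ) :
    ∑ γ : Idx d n, F (Finsupp.equivFunOnFinite.symm γ.1) = ∑ ν ∈ degSet d n, F ν := by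
  rw [degSet, Finset.sum_map]
  exact (Finset.sum_subtype (Finset.Nat.antidiagonalTuple d n) (fun x => Iff.rfl)
    (fun x => F (Finsupp.equivFunOnFinite.symm x))).symm

lemma expand_top (w : MvPolynomial (Fin d) ℝ →ₗ[ℝ] ℝ) {n : ℕ} (q r : MvPolynomial (Fin d) ℝ)
    (hq : q.totalDegree ≤ n)
    (hr : ∀ p : MvPolynomial (Fin d) ℝ, p.totalDegree < n → w (p * r) = 0) :
    w (q * r) = ∑ γ : Idx d n,
      coeff (Finsupp.equivFunOnFinite.symm γ.1) q * w (monIdx γ * r) := by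
  have hmon : ∀ γ : Idx d n, monIdx γ = monomial (Finsupp.equivFunOnFinite.symm γ.1) 1 :=
    fun γ => rfl
  set F : (Fin d →₀ ℕ) → ℝ := fun ν => coeff ν q * w (monomial ν 1 * r) with hF
  have h1 : ∑ γ : Idx d n, coeff (Finsupp.equivFunOnFinite.symm γ.1) q * w (monIdx γ * r)
      = ∑ ν ∈ degSet d n, F ν := by
    rw [← sum_idx F]
    exact Finset.sum_congr rfl fun γ _ => by rw [hF, hmon γ]
  have h2 : w (q * r) = ∑ ν ∈ q.support, F ν := by
    conv_lhs => rw [q.as_sum]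
    rw [Finset.sum_mul, map_sum]
    refine Finset.sum_congr rfl fun ν hν => ?_
    have h3 : (monomial ν) (coeff ν q) * r = coeff ν q • ((monomial ν) 1 * r) := by
      rw [← smul_mul_assoc, smul_monomial, smul_eq_mul, mul_one]
    rw [h3, LinearMap.map_smul, smul_eq_mul]
  have hzero : ∀ ν, ν ∉ q.support → F ν = 0 := fun ν hν => by
    rw [hF]; simp only [MvPolynomial.notMem_support_iff.mp hν, zero_mul]
  have hzero2 : ∀ ν ∈ q.support, ν ∉ degSet d n → F ν = 0 := fun ν hν hν' => by
    have hlt : (ν.sum fun _ e => e) < n :=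
      lt_of_le_of_ne (le_trans (le_totalDegree hν) hq) (fun h => hν' ((mem_degSet ν).mpr h))
    have : w (monomial ν 1 * r) = 0 := by
      have hd : (monomial ν (1:ℝ)).totalDegree < n := by
        rwa [totalDegree_monomial _ one_ne_zero]
      exact hr _ hd
    rw [hF]; simp only [this, mul_zero]
  have e1 : ∑ ν ∈ q.support, F ν = ∑ ν ∈ q.support ∪ degSet d n, F ν :=
    Finset.sum_subset Finset.subset_union_left (fun ν _ h2 => hzero ν h2)
  have e2 : ∑ ν ∈ degSet d n, F ν = ∑ ν ∈ q.support ∪ degSet d n, F ν :=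
    Finset.sum_subset Finset.subset_union_right (fun ν h1 h2 => by
      rcases Finset.mem_union.mp h1 with h | h
      · exact hzero2 ν h h2
      · exact absurd h h2)
  rw [h1, h2, e1, e2]

end UvarovProof
namespace UvarovProof
open MvPolynomial Matrix Finset

variable {d N : ℕ}

lemma sum_slice {k : ℕ} (l : (Σ m : ℕ, Idx d m) →₀ ℝ) (F : (Σ m : ℕ, Idx d m) → ℝ)
    (hF : ∀ σ ∈ l.support, σ.1 ≠ k → l σ * F σ = 0) :
    ∑ σ ∈ l.support, l σ * F σ = ∑ α : Idx d k, l ⟨k, α⟩ * F ⟨k, α⟩ := by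
  classical
  set T : Finset (Σ m : ℕ, Idx d m) :=
    Finset.univ.map ⟨Sigma.mk k, sigma_mk_injective⟩ with hT
  have e1 : ∑ σ ∈ l.support, l σ * F σ = ∑ σ ∈ l.support ∪ T, l σ * F σ :=
    Finset.sum_subset Finset.subset_union_left (fun σ _ h2 => by
      rw [Finsupp.notMem_support_iff.mp h2, zero_mul])
  have e2 : ∑ σ ∈ T, l σ * F σ = ∑ σ ∈ l.support ∪ T, l σ * F σ :=
    Finset.sum_subset Finset.subset_union_right (fun σ h1 h2 => by
      rcases Finset.mem_union.mp h1 with h | h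
      · refine hF σ h fun hk => h2 ?_
        rw [hT, Finset.mem_map]
        obtain ⟨m, a⟩ := σ
        cases hk
        exact ⟨a, Finset.mem_univ _, rfl⟩
      · exact absurd h h2)
  rw [e1, ← e2, hT, Finset.sum_map]
  rfl

lemma fam_image_eq (P : PolySystem d) (n : ℕ) :
    fam P '' {σ | σ.1 ≤ n} = {q | ∃ m ≤ n, ∃ α : Idx d m, q = P.vec m α} := by
  ext q
  constructor
  · rintro ⟨⟨m, α⟩, hm, rfl⟩; exact ⟨m, hm, α, rfl⟩
  · rintro ⟨m, hm, α, rfl⟩; exact ⟨⟨m, α⟩, hm, rfl⟩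

lemma exists_repr (P : PolySystem d) {n : ℕ} (p : MvPolynomial (Fin d) ℝ)
    (hp : p.totalDegree ≤ n) :
    ∃ l : (Σ m : ℕ, Idx d m) →₀ ℝ, (∀ σ ∈ l.support, σ.1 ≤ n) ∧
      Finsupp.linearCombination ℝ (fam P) l = p := by
  have h := P.spans n p hp
  rw [← fam_image_eq, Finsupp.mem_span_image_iff_linearCombination] at h
  obtain ⟨l, hl, hlp⟩ := h
  exact ⟨l, fun σ hσ => hl hσ, hlp⟩

lemma orthoPP (u : MvPolynomial (Fin d) ℝ →ₗ[ℝ] ℝ) (P : PolySystem d) (hP : IsOPS u P)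
    {m k : ℕ} (h : m ≠ k) (α : Idx d m) (β : Idx d k) :
    u (P.vec m α * P.vec k β) = 0 := by
  rcases lt_or_gt_of_ne h with h | h
  · exact orth_poly u _ _ (fun m' hm' α' => hP.1 m' k hm' α' β)
      (by rw [P.degree_eq]; exact h)
  · rw [mul_comm]
    exact orth_poly u _ _ (fun m' hm' α' => hP.1 m' m hm' α' α)
      (by rw [P.degree_eq]; exact h)

lemma pairing (u : MvPolynomial (Fin d) ℝ →ₗ[ℝ] ℝ) (P : PolySystem d) (hP : IsOPS u P)
    (l : (Σ m : ℕ, Idx d m) →₀ ℝ) {k : ℕ} (β : Idx d k) :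
    u (Finsupp.linearCombination ℝ (fam P) l * P.vec k β)
      = ∑ α : Idx d k, l ⟨k, α⟩ * Hmat u P k α β := by
  rw [Finsupp.linearCombination_apply, Finsupp.sum, Finset.sum_mul, map_sum]
  simp_rw [smul_mul_assoc, LinearMap.map_smul, smul_eq_mul]
  exact sum_slice l (fun σ => u (fam P σ * P.vec k β)) fun σ hσ hne => by
    show l σ * u (fam P σ * P.vec k β) = 0
    rw [show fam P σ = P.vec σ.1 σ.2 from rfl, orthoPP u P hP hne _ β, mul_zero]

end UvarovProof
namespace UvarovProof
open MvPolynomial Matrix Finset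

variable {d N : ℕ}

noncomputable def Amat (S : (n : ℕ) → Idx d n → MvPolynomial (Fin d) ℝ) (n : ℕ) :
    Matrix (Idx d n) (Idx d n) ℝ :=
  Matrix.of fun α β => coeff (Finsupp.equivFunOnFinite.symm β.1) (S n α)

lemma gram_eq (w : MvPolynomial (Fin d) ℝ →ₗ[ℝ] ℝ)
    (S : (n : ℕ) → Idx d n → MvPolynomial (Fin d) ℝ) (n : ℕ)
    (hdeg : ∀ α : Idx d n, (S n α).totalDegree ≤ n)
    (horth : ∀ p : MvPolynomial (Fin d) ℝ, p.totalDegree < n →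
      ∀ β : Idx d n, w (p * S n β) = 0) :
    (Matrix.of fun α β : Idx d n => w (S n α * S n β))
      = Amat S n * Matrix.of (fun α β : Idx d n => w (monIdx α * S n β)) := by
  ext α β
  rw [Matrix.mul_apply]
  exact expand_top w _ _ (hdeg α) (fun p hp => horth p hp β)

lemma Amat_unit (P : PolySystem d) (n : ℕ) : IsUnit (Amat P.vec n).det := by
  rw [isUnit_iff_ne_zero]
  intro hdet
  obtain ⟨c, hc0, hc⟩ := Matrix.exists_vecMul_eq_zero_iff.mpr hdet
  set p : MvPolynomial (Fin d) ℝ := ∑ α : Idx d n, c α • P.vec n α with hp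
  have hcoeff : ∀ ν : Fin d →₀ ℕ, n ≤ (ν.sum fun _ e => e) → coeff ν p = 0 := by
    intro ν hν
    rcases eq_or_lt_of_le hν with h | h
    · have : coeff ν p = ∑ α : Idx d n, c α * coeff ν (P.vec n α) := by
        rw [hp]
        simp [MvPolynomial.coeff_sum, MvPolynomial.coeff_smul]
      rw [this]
      have h2 : ∀ α : Idx d n, coeff ν (P.vec n α) = Amat P.vec n α (mkIdx ν h.symm) := by
        intro α
        rw [Amat]
        simp only [Matrix.of_apply, mkIdx, Finsupp.equivFunOnFinite_symm_coe]
      simp_rw [h2]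
      exact congrFun hc (mkIdx ν h.symm)
    · rw [hp]
      simp only [MvPolynomial.coeff_sum, MvPolynomial.coeff_smul]
      refine Finset.sum_eq_zero fun α _ => ?_
      rw [coeff_eq_zero_of_totalDegree_lt (by rw [P.degree_eq]; exact h), smul_eq_mul, mul_zero]
  have hzero : p = 0 := by
    by_contra hne
    have hlt : p.totalDegree < n := by
      by_contra hge
      push_neg at hge
      obtain ⟨ν, hν, hνdeg⟩ : ∃ ν ∈ p.support, (ν.sum fun _ e => e) = p.totalDegree := by
        obtain ⟨ν, hν, h⟩ := Finset.exists_mem_eq_sup p.support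
          (MvPolynomial.support_nonempty.mpr hne) (fun ν => ν.sum fun _ e => e)
        exact ⟨ν, hν, h.symm⟩
      exact MvPolynomial.mem_support_iff.mp hν (hcoeff ν (hνdeg ▸ hge))
    have hn1 : 1 ≤ n := Nat.one_le_iff_ne_zero.mpr (by rintro rfl; exact Nat.not_lt_zero _ hlt)
    have h1 : p ∈ Submodule.span ℝ (fam P '' {σ | σ.1 ≤ n - 1}) := by
      rw [fam_image_eq]
      exact P.spans (n - 1) p (Nat.le_sub_one_of_lt hlt)
    have h2 : p ∈ Submodule.span ℝ (fam P '' {σ | σ.1 = n}) := by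
      rw [hp]
      refine Submodule.sum_mem _ fun α _ => Submodule.smul_mem _ _ (Submodule.subset_span ?_)
      exact ⟨⟨n, α⟩, rfl, rfl⟩
    have hdisj : Disjoint {σ : Σ m : ℕ, Idx d m | σ.1 ≤ n - 1} {σ : Σ m : ℕ, Idx d m | σ.1 = n} := by
      rw [Set.disjoint_left]
      rintro σ hσ1 hσ2
      rw [Set.mem_setOf_eq] at hσ1 hσ2
      omega
    have := P.indep.disjoint_span_image hdisj
    exact hne (Submodule.disjoint_def.mp this p h1 h2)
  have hind : LinearIndependent ℝ (fun α : Idx d n => P.vec n α) :=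
    P.indep.comp (Sigma.mk n) sigma_mk_injective
  have := Fintype.linearIndependent_iff.mp hind c (by rw [← hp]; exact hzero)
  exact hc0 (funext this)

lemma H_unit (u : MvPolynomial (Fin d) ℝ →ₗ[ℝ] ℝ) (P : PolySystem d) (hP : IsOPS u P)
    (n : ℕ) : IsUnit (Hmat u P n).det := by
  have hg := gram_eq u P.vec n (fun α => le_of_eq (P.degree_eq n α))
    (fun p hp β => orth_poly u _ p (fun m hm α => hP.1 m n hm α β) hp)
  rw [show Hmat u P n = _ from hg, Matrix.det_mul]
  exact (Amat_unit P n).mul (hP.2 n)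

lemma H_symm (u : MvPolynomial (Fin d) ℝ →ₗ[ℝ] ℝ) (P : PolySystem d) (n : ℕ) :
    (Hmat u P n)ᵀ = Hmat u P n := by
  ext α β
  simp only [Hmat, Matrix.transpose_apply, Matrix.of_apply, mul_comm]

lemma Hinv_symm (u : MvPolynomial (Fin d) ℝ →ₗ[ℝ] ℝ) (P : PolySystem d) (n : ℕ) :
    ((Hmat u P n)⁻¹)ᵀ = (Hmat u P n)⁻¹ := by
  rw [Matrix.transpose_nonsing_inv, H_symm]

end UvarovProof
namespace UvarovProof
open MvPolynomial Matrix Finset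

variable {d N : ℕ}

noncomputable def KerPoly (u : MvPolynomial (Fin d) ℝ →ₗ[ℝ] ℝ) (P : PolySystem d)
    (x : Fin d → ℝ) (m : ℕ) : MvPolynomial (Fin d) ℝ :=
  ∑ β : Idx d m, (∑ α : Idx d m, eval x (P.vec m α) * (Hmat u P m)⁻¹ α β) • P.vec m β

noncomputable def Kpoly (u : MvPolynomial (Fin d) ℝ →ₗ[ℝ] ℝ) (P : PolySystem d)
    (x : Fin d → ℝ) (n : ℕ) : MvPolynomial (Fin d) ℝ :=
  ∑ m ∈ Finset.range n, KerPoly u P x m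

lemma eval_KerPoly (u : MvPolynomial (Fin d) ℝ →ₗ[ℝ] ℝ) (P : PolySystem d)
    (x y : Fin d → ℝ) (m : ℕ) :
    eval y (KerPoly u P x m) = kerP u P m x y := by
  rw [KerPoly, map_sum, kerP]
  rw [Finset.sum_comm]
  refine Finset.sum_congr rfl fun β _ => ?_
  rw [smul_eval, Finset.sum_mul]

lemma eval_Kpoly (u : MvPolynomial (Fin d) ℝ →ₗ[ℝ] ℝ) (P : PolySystem d)
    (x y : Fin d → ℝ) (n : ℕ) :
    eval y (Kpoly u P x n) = kerLT u P n x y := by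
  rw [Kpoly, map_sum, kerLT]
  exact Finset.sum_congr rfl fun m _ => eval_KerPoly u P x y m

lemma deg_KerPoly (u : MvPolynomial (Fin d) ℝ →ₗ[ℝ] ℝ) (P : PolySystem d)
    (x : Fin d → ℝ) (m : ℕ) : (KerPoly u P x m).totalDegree ≤ m :=
  (totalDegree_finset_sum _ _).trans (Finset.sup_le fun β _ =>
    (totalDegree_smul_le _ _).trans (le_of_eq (P.degree_eq m β)))

lemma deg_Kpoly (u : MvPolynomial (Fin d) ℝ →ₗ[ℝ] ℝ) (P : PolySystem d)
    (x : Fin d → ℝ) {n : ℕ} (hn : 1 ≤ n) : (Kpoly u P x n).totalDegree < n :=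
  lt_of_le_of_lt ((totalDegree_finset_sum _ _).trans (Finset.sup_le fun m hm =>
    (deg_KerPoly u P x m).trans (Nat.le_sub_one_of_lt (Finset.mem_range.mp hm))))
    (by omega)

lemma Kpoly_mem_span (u : MvPolynomial (Fin d) ℝ →ₗ[ℝ] ℝ) (P : PolySystem d)
    (x : Fin d → ℝ) (n : ℕ) :
    Kpoly u P x n ∈ Submodule.span ℝ (fam P '' {σ | σ.1 < n}) := by
  rw [Kpoly]
  refine Submodule.sum_mem _ fun m hm => ?_
  rw [KerPoly]
  refine Submodule.sum_mem _ fun β _ => Submodule.smul_mem _ _ (Submodule.subset_span ?_)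
  exact ⟨⟨m, β⟩, Finset.mem_range.mp hm, rfl⟩

lemma repro (u : MvPolynomial (Fin d) ℝ →ₗ[ℝ] ℝ) (P : PolySystem d) (hP : IsOPS u P)
    {n : ℕ} (p : MvPolynomial (Fin d) ℝ) (hp : p.totalDegree < n) (x : Fin d → ℝ) :
    u (p * Kpoly u P x n) = eval x p := by
  obtain ⟨l, hsupp, rfl⟩ := exists_repr P p (Nat.le_sub_one_of_lt hp)
  have key : ∀ m : ℕ, u (Finsupp.linearCombination ℝ (fam P) l * KerPoly u P x m)
      = ∑ α : Idx d m, l ⟨m, α⟩ * eval x (P.vec m α) := by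
    intro m
    rw [KerPoly, Finset.mul_sum, map_sum]
    have h1 : ∀ β : Idx d m,
        u (Finsupp.linearCombination ℝ (fam P) l *
          ((∑ α : Idx d m, eval x (P.vec m α) * (Hmat u P m)⁻¹ α β) • P.vec m β))
        = (∑ α : Idx d m, eval x (P.vec m α) * (Hmat u P m)⁻¹ α β)
            * (∑ γ : Idx d m, l ⟨m, γ⟩ * Hmat u P m γ β) := by
      intro β
      rw [mul_smul_comm, LinearMap.map_smul, smul_eq_mul, pairing u P hP l β]
    simp_rw [h1]
    -- now a linear algebra identity
    set a : Idx d m → ℝ := fun α => eval x (P.vec m α) with ha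
    set c : Idx d m → ℝ := fun γ => l ⟨m, γ⟩ with hc
    have h2 : ∑ β : Idx d m, (∑ α, a α * (Hmat u P m)⁻¹ α β) * (∑ γ, c γ * Hmat u P m γ β)
        = (a ᵥ* (Hmat u P m)⁻¹) ⬝ᵥ (c ᵥ* Hmat u P m) := by
      rfl
    rw [h2, ← Hinv_symm u P m, Matrix.vecMul_transpose, dotProduct_comm,
      Matrix.dotProduct_mulVec, Matrix.vecMul_vecMul,
      Matrix.mul_nonsing_inv _ (H_unit u P hP m), Matrix.vecMul_one]
    rfl
  rw [Kpoly, Finset.mul_sum, map_sum]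
  simp_rw [key]
  -- ∑ m ∈ range n, ∑ α, l ⟨m,α⟩ * eval x (P.vec m α) = eval x (lc l)
  rw [← Finset.sum_sigma (Finset.range n) (fun _ => Finset.univ)
    (fun σ : Σ m : ℕ, Idx d m => l σ * eval x (P.vec σ.1 σ.2))]
  have hsub : l.support ⊆ (Finset.range n).sigma fun _ => Finset.univ := by
    intro σ hσ
    rw [Finset.mem_sigma]
    exact ⟨Finset.mem_range.mpr (by have := hsupp σ hσ; omega), Finset.mem_univ _⟩
  rw [← Finset.sum_subset hsub (fun σ _ hσ => by
    rw [Finsupp.notMem_support_iff.mp hσ, zero_mul])]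
  rw [Finsupp.linearCombination_apply, Finsupp.sum, map_sum]
  exact Finset.sum_congr rfl fun σ _ => by rw [smul_eval]; rfl

end UvarovProof
namespace UvarovProof
open MvPolynomial Matrix Finset

variable {d N : ℕ}

lemma deg_sub {n : ℕ} (p q : MvPolynomial (Fin d) ℝ)
    (hp : p.totalDegree = n) (hq : q.totalDegree < n) : (p - q).totalDegree = n := by
  refine le_antisymm ((totalDegree_sub p q).trans (by omega)) ?_
  have hpne : p ≠ 0 := by
    rintro rfl
    rw [totalDegree_zero] at hp
    omega
  obtain ⟨ν, hν, hνdeg⟩ := Finset.exists_mem_eq_sup p.support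
    (MvPolynomial.support_nonempty.mpr hpne) (fun ν => ν.sum fun _ e => e)
  have hto : p.totalDegree = ν.sum fun _ e => e := hνdeg
  have hqc : coeff ν q = 0 := coeff_eq_zero_of_totalDegree_lt
    (show q.totalDegree < ν.sum fun _ e => e by rw [← hto, hp]; exact hq)
  have : coeff ν (p - q) ≠ 0 := by
    rw [coeff_sub, hqc, sub_zero]
    exact MvPolynomial.mem_support_iff.mp hν
  calc n = ν.sum fun _ e => e := by rw [← hp]; exact hto
  _ ≤ (p - q).totalDegree := le_totalDegree (MvPolynomial.mem_support_iff.mpr this)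

section Tri

variable (f g : (Σ n : ℕ, Idx d n) → MvPolynomial (Fin d) ℝ)

lemma tri_indep (hf : LinearIndependent ℝ f)
    (hlow : ∀ σ, g σ - f σ ∈ Submodule.span ℝ (f '' {τ | τ.1 < σ.1})) :
    LinearIndependent ℝ g := by
  rw [linearIndependent_iff]
  have key : ∀ n : ℕ, ∀ l : (Σ m : ℕ, Idx d m) →₀ ℝ, (∀ σ ∈ l.support, σ.1 < n) →
      Finsupp.linearCombination ℝ g l = 0 → l = 0 := by
    intro n
    induction n with
    | zero =>
      intro l hl _
      ext σ
      by_contra h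
      exact Nat.not_lt_zero _ (hl σ (Finsupp.mem_support_iff.mpr h))
    | succ n ih =>
      intro l hl hlc
      have hdiff : Finsupp.linearCombination ℝ f l
          ∈ Submodule.span ℝ (f '' {τ | τ.1 < n}) := by
        have : Finsupp.linearCombination ℝ f l
            = - (Finsupp.linearCombination ℝ g l - Finsupp.linearCombination ℝ f l) := by
          rw [hlc]; ring
        rw [this]
        refine Submodule.neg_mem _ ?_
        rw [Finsupp.linearCombination_apply, Finsupp.linearCombination_apply,
          Finsupp.sum, Finsupp.sum, ← Finset.sum_sub_distrib]
        refine Submodule.sum_mem _ fun σ hσ => ?_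
        rw [← smul_sub]
        refine Submodule.smul_mem _ _ (Submodule.span_mono ?_ (hlow σ))
        refine Set.image_mono fun τ hτ => ?_
        have := hl σ hσ
        simp only [Set.mem_setOf_eq] at hτ ⊢
        omega
      rw [Finsupp.mem_span_image_iff_linearCombination] at hdiff
      obtain ⟨l', hl', hl'eq⟩ := hdiff
      have hll' : l = l' := by
        have := linearIndependent_iff.mp hf (l - l') (by rw [map_sub, hl'eq, sub_self])
        have h2 : l - l' = 0 := this
        ext σ
        have := congrFun (congrArg (DFunLike.coe) h2) σ
        simpa [sub_eq_zero] using this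
      refine ih l (fun σ hσ => ?_) hlc
      rw [hll'] at hσ
      exact hl' hσ
  intro l hlc
  exact key (l.support.sup (·.1) + 1) l
    (fun σ hσ => Nat.lt_succ_of_le (Finset.le_sup hσ)) hlc

lemma tri_span (hlow : ∀ σ, g σ - f σ ∈ Submodule.span ℝ (f '' {τ | τ.1 < σ.1})) (n : ℕ) :
    Submodule.span ℝ (f '' {σ | σ.1 ≤ n}) ≤ Submodule.span ℝ (g '' {σ | σ.1 ≤ n}) := by
  induction n using Nat.strong_induction_on with
  | _ n ih =>
    refine Submodule.span_le.mpr ?_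
    rintro _ ⟨σ, hσ, rfl⟩
    simp only [Set.mem_setOf_eq] at hσ
    have h1 : f σ = g σ - (g σ - f σ) := by ring
    rw [SetLike.mem_coe, h1]
    refine Submodule.sub_mem _ (Submodule.subset_span ⟨σ, hσ, rfl⟩) ?_
    have hsp : Submodule.span ℝ (f '' {τ | τ.1 < σ.1})
        ≤ Submodule.span ℝ (g '' {τ | τ.1 ≤ n}) := by
      refine Submodule.span_le.mpr ?_
      rintro _ ⟨τ, hτ, rfl⟩
      simp only [Set.mem_setOf_eq] at hτ
      have hτn : τ.1 < n := lt_of_lt_of_le hτ hσ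
      have := ih τ.1 hτn (Submodule.subset_span ⟨τ, Set.mem_setOf_eq ▸ le_refl τ.1, rfl⟩)
      exact SetLike.mem_coe.mpr
        (Submodule.span_mono (Set.image_mono fun ρ hρ => le_trans hρ (le_of_lt hτn)) this)
    exact hsp (hlow σ)

end Tri

end UvarovProof
namespace UvarovProof
open MvPolynomial Matrix Finset

variable {d N : ℕ}

noncomputable def Bmat (u : MvPolynomial (Fin d) ℝ →ₗ[ℝ] ℝ) (P : PolySystem d)
    (ξ : Fin N → (Fin d → ℝ)) (lam : Fin N → ℝ) (n : ℕ) : Matrix (Fin N) (Fin N) ℝ :=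
  1 + Matrix.diagonal lam * Kmat u P ξ n

noncomputable def Mmat (u : MvPolynomial (Fin d) ℝ →ₗ[ℝ] ℝ) (P : PolySystem d)
    (ξ : Fin N → (Fin d → ℝ)) (lam : Fin N → ℝ) (n : ℕ) : Matrix (Idx d n) (Fin N) ℝ :=
  Pmat P ξ n * (Bmat u P ξ lam n)⁻¹ * Matrix.diagonal lam

noncomputable def Qv (u : MvPolynomial (Fin d) ℝ →ₗ[ℝ] ℝ) (P : PolySystem d)
    (ξ : Fin N → (Fin d → ℝ)) (lam : Fin N → ℝ) (n : ℕ) (β : Idx d n) :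
    MvPolynomial (Fin d) ℝ :=
  P.vec n β - ∑ i : Fin N, Mmat u P ξ lam n β i • Kpoly u P (ξ i) n

variable (u : MvPolynomial (Fin d) ℝ →ₗ[ℝ] ℝ) (P : PolySystem d)
  (ξ : Fin N → (Fin d → ℝ)) (lam : Fin N → ℝ)

lemma Kmat_zero : Kmat u P ξ 0 = 0 := by
  ext i j
  simp [Kmat, kerLT]

lemma Qv_zero : Qv u P ξ lam 0 = P.vec 0 := by
  funext β
  rw [Qv]
  have : ∀ i : Fin N, Kpoly u P (ξ i) 0 = 0 := fun i => by rw [Kpoly]; simp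
  simp [this]

lemma B_unit (hinv : ∀ n : ℕ, 1 ≤ n → IsUnit (1 + Matrix.diagonal lam * Kmat u P ξ n).det)
    (n : ℕ) : IsUnit (Bmat u P ξ lam n).det := by
  rcases Nat.eq_zero_or_pos n with rfl | hn
  · rw [Bmat, Kmat_zero, mul_zero, add_zero, Matrix.det_one]
    exact isUnit_one
  · exact hinv n hn

lemma KI (hinv : ∀ n : ℕ, 1 ≤ n → IsUnit (1 + Matrix.diagonal lam * Kmat u P ξ n).det)
    (n : ℕ) :
    Mmat u P ξ lam n * Kmat u P ξ n * Matrix.diagonal lam + Mmat u P ξ lam n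
      = Pmat P ξ n * Matrix.diagonal lam := by
  have hB := B_unit u P ξ lam hinv n
  have h1 : Mmat u P ξ lam n * Kmat u P ξ n * Matrix.diagonal lam + Mmat u P ξ lam n
      = Pmat P ξ n * (Bmat u P ξ lam n)⁻¹ *
        (Matrix.diagonal lam * Kmat u P ξ n * Matrix.diagonal lam + Matrix.diagonal lam) := by
    rw [Mmat, Matrix.mul_add]
    simp only [Matrix.mul_assoc]
  rw [h1, show Matrix.diagonal lam * Kmat u P ξ n * Matrix.diagonal lam + Matrix.diagonal lam
      = Bmat u P ξ lam n * Matrix.diagonal lam by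
        rw [Bmat, Matrix.add_mul, Matrix.one_mul, add_comm]]
  rw [← Matrix.mul_assoc, Matrix.mul_assoc (Pmat P ξ n), Matrix.nonsing_inv_mul _ hB,
    Matrix.mul_one]

lemma eval_Qv (n : ℕ) (β : Idx d n) (x : Fin d → ℝ) :
    eval x (Qv u P ξ lam n β) = eval x (P.vec n β)
      - ∑ i, Mmat u P ξ lam n β i * kerLT u P n (ξ i) x := by
  rw [Qv, map_sub, map_sum]
  congr 1
  exact Finset.sum_congr rfl fun i _ => by rw [smul_eval, eval_Kpoly]

lemma eval_Qv_xi (n : ℕ) (β : Idx d n) (j : Fin N) :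
    eval (ξ j) (Qv u P ξ lam n β)
      = (Pmat P ξ n - Mmat u P ξ lam n * Kmat u P ξ n) β j := by
  rw [eval_Qv, Matrix.sub_apply, Matrix.mul_apply]
  rfl

lemma deg_Qv (n : ℕ) (β : Idx d n) : (Qv u P ξ lam n β).totalDegree = n := by
  rcases Nat.eq_zero_or_pos n with rfl | hn
  · rw [Qv_zero]; exact P.degree_eq 0 β
  · refine deg_sub _ _ (P.degree_eq n β) ?_
    refine lt_of_le_of_lt ((totalDegree_finset_sum _ _).trans (Finset.sup_le fun i _ =>
      (totalDegree_smul_le _ _).trans ?_)) (show n - 1 < n by omega)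
    exact Nat.le_sub_one_of_lt (deg_Kpoly u P (ξ i) hn)

lemma Qv_corr_mem (n : ℕ) (β : Idx d n) :
    Qv u P ξ lam n β - P.vec n β ∈ Submodule.span ℝ (fam P '' {τ | τ.1 < n}) := by
  rw [Qv, sub_sub_cancel_left]
  refine Submodule.neg_mem _ (Submodule.sum_mem _ fun i _ => Submodule.smul_mem _ _ ?_)
  exact Kpoly_mem_span u P (ξ i) n

end UvarovProof
namespace UvarovProof
open MvPolynomial Matrix Finset

variable {d N : ℕ}
variable (u v : MvPolynomial (Fin d) ℝ →ₗ[ℝ] ℝ) (P : PolySystem d)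
  (ξ : Fin N → (Fin d → ℝ)) (lam : Fin N → ℝ)

lemma EM (hinv : ∀ n : ℕ, 1 ≤ n → IsUnit (1 + Matrix.diagonal lam * Kmat u P ξ n).det)
    (n : ℕ) :
    (Pmat P ξ n - Mmat u P ξ lam n * Kmat u P ξ n) * Matrix.diagonal lam
      = Mmat u P ξ lam n := by
  rw [Matrix.sub_mul, sub_eq_iff_eq_add]
  have h := KI u P ξ lam hinv n
  rw [add_comm] at h
  exact h.symm

lemma Qv_orth
    (hv : ∀ p : MvPolynomial (Fin d) ℝ, v p = u p + ∑ i, lam i * eval (ξ i) p)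
    (hP : IsOPS u P)
    (hinv : ∀ n : ℕ, 1 ≤ n → IsUnit (1 + Matrix.diagonal lam * Kmat u P ξ n).det)
    {m n : ℕ} (hmn : m < n) (α : Idx d m) (β : Idx d n) :
    v (monIdx α * Qv u P ξ lam n β) = 0 := by
  have hdeg : (monIdx α).totalDegree < n := by rw [deg_monIdx]; exact hmn
  have hu : u (monIdx α * Qv u P ξ lam n β)
      = - ∑ i, Mmat u P ξ lam n β i * eval (ξ i) (monIdx α) := by
    rw [Qv, mul_sub, map_sub, hP.1 m n hmn α β, zero_sub, neg_inj,
      Finset.mul_sum, map_sum]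
    refine Finset.sum_congr rfl fun i _ => ?_
    rw [mul_smul_comm, LinearMap.map_smul, smul_eq_mul, repro u P hP _ hdeg (ξ i)]
  rw [hv, hu]
  have he : ∀ j : Fin N, lam j * eval (ξ j) (monIdx α * Qv u P ξ lam n β)
      = Mmat u P ξ lam n β j * eval (ξ j) (monIdx α) := by
    intro j
    have hM : (Pmat P ξ n - Mmat u P ξ lam n * Kmat u P ξ n) β j * lam j
        = Mmat u P ξ lam n β j := by
      have := congrFun (congrFun (EM u P ξ lam hinv n) β) j
      rwa [Matrix.mul_diagonal] at this
    rw [_root_.map_mul, eval_Qv_xi, ← hM]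
    ring
  rw [Finset.sum_congr rfl fun j _ => he j]
  ring

end UvarovProof
namespace UvarovProof
open MvPolynomial Matrix Finset

variable {d N : ℕ}
variable (u v : MvPolynomial (Fin d) ℝ →ₗ[ℝ] ℝ) (P : PolySystem d)
  (ξ : Fin N → (Fin d → ℝ)) (lam : Fin N → ℝ)

lemma step1 (hP : IsOPS u P) (n : ℕ) (α : Idx d n) (x : Fin d → ℝ) :
    u (P.vec n α * Kpoly u P x n) = 0 := by
  rcases Nat.eq_zero_or_pos n with rfl | hn
  · rw [Kpoly]; simp
  · rw [mul_comm]
    exact orth_poly u _ _ (fun m hm γ => hP.1 m n hm γ α) (deg_Kpoly u P x hn)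

lemma step2 (hP : IsOPS u P) (n : ℕ) (β : Idx d n) (i : Fin N) :
    u (Kpoly u P (ξ i) n * Qv u P ξ lam n β)
      = - ∑ j, Mmat u P ξ lam n β j * Kmat u P ξ n j i := by
  rcases Nat.eq_zero_or_pos n with rfl | hn
  · rw [Kmat_zero]
    rw [show Kpoly u P (ξ i) 0 = 0 by rw [Kpoly]; simp]
    simp
  · rw [Qv, mul_sub, map_sub,
      show Kpoly u P (ξ i) n * P.vec n β = P.vec n β * Kpoly u P (ξ i) n from mul_comm _ _,
      step1 u P hP n β (ξ i), zero_sub, neg_inj, Finset.mul_sum, map_sum]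
    refine Finset.sum_congr rfl fun j _ => ?_
    rw [mul_smul_comm, LinearMap.map_smul, smul_eq_mul, mul_comm (Kpoly u P (ξ i) n),
      repro u P hP _ (deg_Kpoly u P (ξ j) hn) (ξ i), eval_Kpoly]
    rfl

lemma step3 (hP : IsOPS u P) (n : ℕ) (α β : Idx d n) :
    u (Qv u P ξ lam n α * Qv u P ξ lam n β)
      = Hmat u P n α β
        + ∑ i, Mmat u P ξ lam n α i * (∑ j, Mmat u P ξ lam n β j * Kmat u P ξ n j i) := by
  rw [show Qv u P ξ lam n α * Qv u P ξ lam n β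
      = P.vec n α * Qv u P ξ lam n β
        - ∑ i, Mmat u P ξ lam n α i • (Kpoly u P (ξ i) n * Qv u P ξ lam n β) by
    rw [Qv, sub_mul, Finset.sum_mul]
    congr 1
    exact Finset.sum_congr rfl fun i _ => smul_mul_assoc _ _ _]
  rw [map_sub, map_sum]
  have h1 : u (P.vec n α * Qv u P ξ lam n β) = Hmat u P n α β := by
    rw [Qv, mul_sub, map_sub, Finset.mul_sum, map_sum]
    rw [show ∑ i, u (P.vec n α * Mmat u P ξ lam n β i • Kpoly u P (ξ i) n) = 0 from
      Finset.sum_eq_zero fun i _ => by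
        rw [mul_smul_comm, LinearMap.map_smul, smul_eq_mul, step1 u P hP n α (ξ i), mul_zero]]
    rw [sub_zero]
    rfl
  rw [h1]
  have h2 : ∑ i, u (Mmat u P ξ lam n α i • (Kpoly u P (ξ i) n * Qv u P ξ lam n β))
      = - ∑ i, Mmat u P ξ lam n α i * (∑ j, Mmat u P ξ lam n β j * Kmat u P ξ n j i) := by
    rw [← Finset.sum_neg_distrib]
    refine Finset.sum_congr rfl fun i _ => ?_
    rw [LinearMap.map_smul, smul_eq_mul, step2 u P ξ lam hP n β i]
    ring
  rw [h2, sub_neg_eq_add]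

end UvarovProof
namespace UvarovProof
open MvPolynomial Matrix Finset

variable {d N : ℕ}
variable (u v : MvPolynomial (Fin d) ℝ →ₗ[ℝ] ℝ) (P : PolySystem d)
  (ξ : Fin N → (Fin d → ℝ)) (lam : Fin N → ℝ)

lemma Qv_det
    (hv : ∀ p : MvPolynomial (Fin d) ℝ, v p = u p + ∑ i, lam i * eval (ξ i) p)
    (hP : IsOPS u P)
    (hinv : ∀ n : ℕ, 1 ≤ n → IsUnit (1 + Matrix.diagonal lam * Kmat u P ξ n).det)
    (hHhat : ∀ n : ℕ, IsUnit (Hmat u P n +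
      Pmat P ξ n * (1 + Matrix.diagonal lam * Kmat u P ξ n)⁻¹ *
        Matrix.diagonal lam * (Pmat P ξ n)ᵀ).det)
    (n : ℕ) :
    IsUnit (Matrix.of fun α β : Idx d n => v (monIdx α * Qv u P ξ lam n β)).det := by
  have horthp : ∀ p : MvPolynomial (Fin d) ℝ, p.totalDegree < n →
      ∀ β : Idx d n, v (p * Qv u P ξ lam n β) = 0 :=
    fun p hp β => orth_poly v _ p
      (fun m hm α => Qv_orth u v P ξ lam hv hP hinv hm α β) hp
  have hg := gram_eq v (Qv u P ξ lam) n
    (fun α => le_of_eq (deg_Qv u P ξ lam n α)) horthp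
  have hmx : Mmat u P ξ lam n * (Mmat u P ξ lam n * Kmat u P ξ n)ᵀ
      + (Pmat P ξ n - Mmat u P ξ lam n * Kmat u P ξ n) * Matrix.diagonal lam *
        (Pmat P ξ n - Mmat u P ξ lam n * Kmat u P ξ n)ᵀ
      = Mmat u P ξ lam n * (Pmat P ξ n)ᵀ := by
    rw [EM u P ξ lam hinv n, Matrix.transpose_sub, Matrix.mul_sub]
    abel
  have hH : (Matrix.of fun α β : Idx d n => v (Qv u P ξ lam n α * Qv u P ξ lam n β))
      = Hmat u P n + Mmat u P ξ lam n * (Pmat P ξ n)ᵀ := by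
    ext α β
    have hentry := congrFun (congrFun hmx α) β
    have e1 : (Mmat u P ξ lam n * (Mmat u P ξ lam n * Kmat u P ξ n)ᵀ) α β
        = ∑ i, Mmat u P ξ lam n α i *
            (∑ j, Mmat u P ξ lam n β j * Kmat u P ξ n j i) := by
      rw [Matrix.mul_apply]
      refine Finset.sum_congr rfl fun i _ => ?_
      rw [Matrix.transpose_apply, Matrix.mul_apply]
    have e2 : ((Pmat P ξ n - Mmat u P ξ lam n * Kmat u P ξ n) * Matrix.diagonal lam *
          (Pmat P ξ n - Mmat u P ξ lam n * Kmat u P ξ n)ᵀ) α β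
        = ∑ j, lam j * eval (ξ j) (Qv u P ξ lam n α * Qv u P ξ lam n β) := by
      rw [Matrix.mul_apply]
      refine Finset.sum_congr rfl fun j _ => ?_
      rw [Matrix.mul_diagonal, Matrix.transpose_apply, _root_.map_mul,
        eval_Qv_xi, eval_Qv_xi]
      ring
    rw [Matrix.add_apply, e1, e2] at hentry
    show v (Qv u P ξ lam n α * Qv u P ξ lam n β) = _
    rw [hv, step3 u P ξ lam hP n α β, Matrix.add_apply]
    linarith
  have hu2 : IsUnit ((Amat (Qv u P ξ lam) n *
      Matrix.of fun α β : Idx d n => v (monIdx α * Qv u P ξ lam n β)).det) := by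
    rw [← hg, hH]
    exact hHhat n
  rw [Matrix.det_mul] at hu2
  exact isUnit_of_mul_isUnit_right hu2

end UvarovProof
namespace UvarovProof
open MvPolynomial Matrix Finset

variable {d N : ℕ}

lemma image_eq' (S : (n : ℕ) → Idx d n → MvPolynomial (Fin d) ℝ) (n : ℕ) :
    (fun σ : Σ m : ℕ, Idx d m => S σ.1 σ.2) '' {σ | σ.1 ≤ n}
      = {q | ∃ m ≤ n, ∃ α : Idx d m, q = S m α} := by
  ext q
  constructor
  · rintro ⟨⟨m, α⟩, hm, rfl⟩; exact ⟨m, hm, α, rfl⟩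
  · rintro ⟨m, hm, α, rfl⟩; exact ⟨⟨m, α⟩, hm, rfl⟩

noncomputable def Qsys (u : MvPolynomial (Fin d) ℝ →ₗ[ℝ] ℝ) (P : PolySystem d)
    (ξ : Fin N → (Fin d → ℝ)) (lam : Fin N → ℝ) : PolySystem d where
  vec := Qv u P ξ lam
  degree_eq := deg_Qv u P ξ lam
  indep := tri_indep (fam P) (fun σ => Qv u P ξ lam σ.1 σ.2) P.indep
    (fun σ => Qv_corr_mem u P ξ lam σ.1 σ.2)
  spans := fun n p hp => by
    have h1 : p ∈ Submodule.span ℝ (fam P '' {σ | σ.1 ≤ n}) := by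
      rw [fam_image_eq]
      exact P.spans n p hp
    have h2 := tri_span (fam P) (fun σ => Qv u P ξ lam σ.1 σ.2)
      (fun σ => Qv_corr_mem u P ξ lam σ.1 σ.2) n h1
    rwa [image_eq' (Qv u P ξ lam) n] at h2

end UvarovProof

open UvarovProof

/-- Theorem 3.1, sufficiency. If for every `n ≥ 1` the matrix
`I_N + Λ𝒦_{n-1}` is invertible and for every `n ≥ 0` the matrix
`Ĥ_n = H_n + 𝖯_n(ξ)(I_N + Λ𝒦_{n-1})⁻¹ Λ 𝖯_n(ξ)^t` is invertible, then the polynomial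
vectors `ℚ_0 = ℙ_0`, `ℚ_n(x) = ℙ_n(x) - 𝖯_n(ξ)(I_N + Λ𝒦_{n-1})⁻¹ Λ 𝖪_{n-1}(ξ,x)` form
an OPS with respect to the Uvarov modification `v`; in particular `v` is quasi-definite. -/
theorem uvarov_sufficiency
    {d N : ℕ} (hd : 1 ≤ d) (hN : 1 ≤ N)
    (u v : MvPolynomial (Fin d) ℝ →ₗ[ℝ] ℝ)
    (ξ : Fin N → (Fin d → ℝ)) (hξ : Function.Injective ξ)
    (lam : Fin N → ℝ) (hlam : ∀ i, lam i ≠ 0)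
    (hv : ∀ p : MvPolynomial (Fin d) ℝ, v p = u p + ∑ i, lam i * eval (ξ i) p)
    (P : PolySystem d) (hP : IsOPS u P)
    (hinv : ∀ n : ℕ, 1 ≤ n → IsUnit (1 + Matrix.diagonal lam * Kmat u P ξ n).det)
    (hHhat : ∀ n : ℕ, IsUnit (Hmat u P n +
      Pmat P ξ n * (1 + Matrix.diagonal lam * Kmat u P ξ n)⁻¹ *
        Matrix.diagonal lam * (Pmat P ξ n)ᵀ).det) :
    ∃ Q : PolySystem d,
      Q.vec 0 = P.vec 0 ∧
      (∀ n : ℕ, 1 ≤ n → ∀ (β : Idx d n) (x : Fin d → ℝ),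
        eval x (Q.vec n β) = eval x (P.vec n β) -
          ∑ i, (Pmat P ξ n * (1 + Matrix.diagonal lam * Kmat u P ξ n)⁻¹ *
              Matrix.diagonal lam) β i * Kvec u P ξ n x i) ∧
      IsOPS v Q ∧ QuasiDefinite v := by
  have hOPS : IsOPS v (Qsys u P ξ lam) :=
    ⟨fun m n hmn α β => Qv_orth u v P ξ lam hv hP hinv hmn α β,
     fun n => Qv_det u v P ξ lam hv hP hinv hHhat n⟩
  refine ⟨Qsys u P ξ lam, Qv_zero u P ξ lam, ?_, hOPS, ⟨Qsys u P ξ lam, hOPS⟩⟩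
  intro n hn β x
  rw [show (Qsys u P ξ lam).vec n β = Qv u P ξ lam n β from rfl, eval_Qv]
  rfl
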